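/- The image of s in 𝓡 = ℂ[s,A,B,C,D,E]/I_{sE} is not a zero divisor. -/

import Mathlib

open MvPolynomial

set_option maxRecDepth 4000

/-- Variables: `s = X 0`, `A = X 1`, `B = X 2`, `C = X 3`, `D = X 4`, `E = X 5`. -/
noncomputable def n₁ : MvPolynomial (Fin 6) ℂ :=
  ((X 1) ^ 2 + (X 0) ^ 5 * (X 5) ^ 5) * (X 1) ^ 2 - X 2 * X 3

noncomputable def n₂ : MvPolynomial (Fin 6) ℂ :=
  ((X 1) ^ 2 + (X 0) ^ 5 * (X 5) ^ 5) * ((X 2) ^ 2 - X 4) - X 3 * X 4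

noncomputable def n₃ : MvPolynomial (Fin 6) ℂ :=
  X 2 * ((X 2) ^ 2 - X 4) - (X 1) ^ 2 * X 4

/-- The ideal generated by the three 2×2 minors of
`[[A² + s⁵E⁵, B, D], [C, A², B² − D]]`. -/
noncomputable def I_sE : Ideal (MvPolynomial (Fin 6) ℂ) :=
  Ideal.span {n₁, n₂, n₃}

namespace Stmt13Aux

noncomputable section

abbrev R6 : Type := MvPolynomial (Fin 6) ℂ
abbrev K5 : Type := MvPolynomial (Fin 5) ℂ

/-- Substitute the variable `X j` by `0`. -/
def sub (j : Fin 6) : R6 →ₐ[ℂ] R6 := aeval (fun i => if i = j then 0 else X i)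

lemma sub_X (j i : Fin 6) : sub j (X i) = if i = j then 0 else X i := by
  simp [sub]

lemma X_dvd_sub_sub (j : Fin 6) (p : R6) : X j ∣ p - sub j p := by
  induction p using MvPolynomial.induction_on with
  | C a => simp [sub]
  | add p q hp hq =>
      have h := dvd_add hp hq
      rw [map_add]
      convert h using 1
      ring
  | mul_X p i hp =>
      rw [map_mul, sub_X]
      by_cases h : i = j
      · subst h
        rw [if_pos rfl, mul_zero, sub_zero]
        exact ⟨p, by ring⟩
      · rw [if_neg h]
        have : p * X i - sub j p * X i = (p - sub j p) * X i := by ring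
        rw [this]
        exact hp.mul_right _

lemma not_dvd_of_aeval {n : ℕ} (p q : MvPolynomial (Fin n) ℂ) (g : Fin n → ℂ)
    (hp : aeval g p = 0) (hq : aeval g q ≠ 0) : ¬ p ∣ q := by
  rintro ⟨k, rfl⟩
  apply hq
  rw [map_mul, hp, zero_mul]

lemma ne_zero_of_aeval {n : ℕ} (p : MvPolynomial (Fin n) ℂ) (g : Fin n → ℂ)
    (hq : aeval g p ≠ 0) : p ≠ 0 := fun h => hq (by simp [h])

lemma prime_X_fin {n : ℕ} (j : Fin (n + 1)) :
    Prime (X j : MvPolynomial (Fin (n + 1)) ℂ) := by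
  rw [← MulEquiv.prime_iff (renameEquiv ℂ (Equiv.swap j 0)).toMulEquiv]
  have h1 : (renameEquiv ℂ (Equiv.swap j 0)).toMulEquiv (X j)
      = (X 0 : MvPolynomial (Fin (n + 1)) ℂ) := by
    show renameEquiv ℂ (Equiv.swap j 0) (X j) = _
    rw [renameEquiv_apply, rename_X, Equiv.swap_apply_left]
  rw [h1, ← MulEquiv.prime_iff (finSuccEquiv ℂ n).toMulEquiv]
  have h2 : (finSuccEquiv ℂ n).toMulEquiv (X 0) = Polynomial.X := finSuccEquiv_X_zero
  rw [h2]
  exact Polynomial.prime_X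

lemma sq_dvd_of_prime {x g p : R6} (hp : Prime p) (hnd : ¬ p ∣ g) (h : p ^ 2 ∣ x * g) :
    p ^ 2 ∣ x := by
  obtain ⟨k, hk⟩ := h
  have h1 : p ∣ x := by
    have hd : p ∣ x * g := dvd_trans (dvd_pow_self p two_ne_zero) ⟨k, hk⟩
    exact (hp.dvd_or_dvd hd).resolve_right hnd
  obtain ⟨x', rfl⟩ := h1
  have h2 : x' * g = p * k := by
    apply mul_left_cancel₀ hp.ne_zero
    linear_combination hk
  have h3 : p ∣ x' := (hp.dvd_or_dvd ⟨k, h2⟩).resolve_right hnd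
  obtain ⟨x'', rfl⟩ := h3
  exact ⟨x'', by ring⟩

def φ : R6 ≃ₐ[ℂ] Polynomial K5 :=
  (renameEquiv ℂ (Equiv.swap (3 : Fin 6) 0)).trans (finSuccEquiv ℂ 5)

lemma φ_X1 : φ (X 1) = Polynomial.C (X 0 : K5) := by
  unfold φ
  rw [AlgEquiv.trans_apply, renameEquiv_apply, rename_X,
    Equiv.swap_apply_of_ne_of_ne (by decide) (by decide),
    show ((1 : Fin 6)) = Fin.succ 0 from rfl, finSuccEquiv_X_succ]

lemma φ_X2 : φ (X 2) = Polynomial.C (X 1 : K5) := by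
  unfold φ
  rw [AlgEquiv.trans_apply, renameEquiv_apply, rename_X,
    Equiv.swap_apply_of_ne_of_ne (by decide) (by decide),
    show ((2 : Fin 6)) = Fin.succ 1 from rfl, finSuccEquiv_X_succ]

lemma φ_X3 : φ (X 3) = Polynomial.X := by
  unfold φ
  rw [AlgEquiv.trans_apply, renameEquiv_apply, rename_X,
    Equiv.swap_apply_left, finSuccEquiv_X_zero]

lemma φ_X4 : φ (X 4) = Polynomial.C (X 3 : K5) := by
  unfold φ
  rw [AlgEquiv.trans_apply, renameEquiv_apply, rename_X,
    Equiv.swap_apply_of_ne_of_ne (by decide) (by decide),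
    show ((4 : Fin 6)) = Fin.succ 3 from rfl, finSuccEquiv_X_succ]

/-- The Koszul-type step: the syzygies of `q₂, q₃`. -/
lemma koszul (b c : R6)
    (h : b * (X 1 ^ 2 * (X 2 ^ 2 - X 4) - X 3 * X 4)
        + c * (X 2 * (X 2 ^ 2 - X 4) - X 1 ^ 2 * X 4) = 0) :
    ∃ l : R6, b = -(l * (X 2 * (X 2 ^ 2 - X 4) - X 1 ^ 2 * X 4))
      ∧ c = l * (X 1 ^ 2 * (X 2 ^ 2 - X 4) - X 3 * X 4) := by
  set q2 : R6 := X 1 ^ 2 * (X 2 ^ 2 - X 4) - X 3 * X 4 with hq2def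
  set q3 : R6 := X 2 * (X 2 ^ 2 - X 4) - X 1 ^ 2 * X 4 with hq3def
  have hφq2 : φ q2 = Polynomial.C (-(X 3) : K5) * Polynomial.X
      + Polynomial.C (X 0 ^ 2 * (X 1 ^ 2 - X 3) : K5) := by
    rw [hq2def]
    simp only [map_sub, map_mul, map_pow, φ_X1, φ_X2, φ_X3, φ_X4]
    simp only [Polynomial.C_neg, Polynomial.C_mul, Polynomial.C_pow, Polynomial.C_sub]
    ring
  have hφq3 : φ q3 = Polynomial.C (X 1 * (X 1 ^ 2 - X 3) - X 0 ^ 2 * X 3 : K5) := by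
    rw [hq3def]
    simp only [map_sub, map_mul, map_pow, φ_X1, φ_X2, φ_X4]
  have hX3ne : (-(X 3) : K5) ≠ 0 := neg_ne_zero.mpr (MvPolynomial.X_ne_zero 3)
  have hdeg : (φ q2).degree = 1 := by
    rw [hφq2]
    exact Polynomial.degree_linear hX3ne
  have hprim : (φ q2).IsPrimitive := by
    intro r hr
    have hco1 : r ∣ (-(X 3) : K5) := by
      have h1 := (Polynomial.C_dvd_iff_dvd_coeff r (φ q2)).mp hr 1
      rwa [hφq2, Polynomial.coeff_add, Polynomial.coeff_C_mul, Polynomial.coeff_X_one,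
        mul_one, Polynomial.coeff_C, if_neg one_ne_zero, add_zero] at h1
    have hco0 : r ∣ (X 0 ^ 2 * (X 1 ^ 2 - X 3) : K5) := by
      have h0 := (Polynomial.C_dvd_iff_dvd_coeff r (φ q2)).mp hr 0
      rwa [hφq2, Polynomial.coeff_add, Polynomial.coeff_C_mul, Polynomial.coeff_X_zero,
        mul_zero, zero_add, Polynomial.coeff_C_zero] at h0
    rw [dvd_neg] at hco1
    obtain ⟨e, he⟩ := hco1
    rcases (prime_X_fin (3 : Fin 5)).irreducible.isUnit_or_isUnit he with hu | hu
    · exact hu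
    · exfalso
      have hX3r : (X 3 : K5) ∣ X 0 ^ 2 * (X 1 ^ 2 - X 3) := by
        refine dvd_trans ?_ hco0
        obtain ⟨u, rfl⟩ := hu
        exact ⟨(u⁻¹ : K5ˣ), by rw [he]; rw [mul_assoc]; simp⟩
      revert hX3r
      refine not_dvd_of_aeval _ _ (fun i => if i = 3 then 0 else 1) (by simp) (by simp)
  have hprime : Prime (φ q2) := by
    letI : NormalizationMonoid K5 :=
      (UniqueFactorizationMonoid.strongNormalizationMonoid : StrongNormalizationMonoid K5).toNormalizationMonoid
    letI : NormalizedGCDMonoid K5 := UniqueFactorizationMonoid.toNormalizedGCDMonoid K5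
    rw [← UniqueFactorizationMonoid.irreducible_iff_prime]
    rw [hprim.irreducible_iff_irreducible_map_fraction_map (K := FractionRing K5)]
    apply Polynomial.irreducible_of_degree_eq_one
    rw [Polynomial.degree_map_eq_of_injective (IsFractionRing.injective K5 (FractionRing K5))]
    exact hdeg
  have hφ := congrArg φ h
  simp only [map_add, map_mul, map_zero] at hφ
  have hdvd : φ q2 ∣ φ c * φ q3 := ⟨-(φ b), by linear_combination hφ⟩
  have hgne : (X 1 * (X 1 ^ 2 - X 3) - X 0 ^ 2 * X 3 : K5) ≠ 0 := by
    apply ne_zero_of_aeval _ (fun i => if i = 1 then 1 else 0)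
    simp
  have hnotdvd : ¬ φ q2 ∣ φ q3 := by
    intro hd
    have hne : φ q3 ≠ 0 := by
      rw [hφq3]
      exact fun hC => hgne (Polynomial.C_eq_zero.mp hC)
    have hle := Polynomial.degree_le_of_dvd hd hne
    rw [hdeg, hφq3, Polynomial.degree_C hgne] at hle
    exact absurd hle (by decide)
  have hdc : φ q2 ∣ φ c := (hprime.dvd_or_dvd hdvd).resolve_right hnotdvd
  obtain ⟨μ, hμ⟩ := hdc
  have hc : c = φ.symm μ * q2 := by
    have h2 := congrArg φ.symm hμ
    rw [AlgEquiv.symm_apply_apply, map_mul, AlgEquiv.symm_apply_apply] at h2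
    rw [h2]; ring
  have hq2ne : q2 ≠ 0 := by
    apply ne_zero_of_aeval _ (fun i => if i = 1 ∨ i = 2 then 1 else 0)
    rw [hq2def]
    simp
  have hb : b = -(φ.symm μ * q3) := by
    have hz : q2 * (b + φ.symm μ * q3) = 0 := by linear_combination h - q3 * hc
    have := (mul_eq_zero.mp hz).resolve_left hq2ne
    linear_combination this
  exact ⟨φ.symm μ, hb, hc⟩

end

end Stmt13Aux

open Stmt13Aux in
/-- The image of `s` in `𝓡 = ℂ[s,A,B,C,D,E]/I_{sE}` is not a zero divisor. -/
theorem stmt_13 :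
    Ideal.Quotient.mk I_sE (X 0) ∈
      nonZeroDivisors (MvPolynomial (Fin 6) ℂ ⧸ I_sE) := by
  rw [mem_nonZeroDivisors_iff_right]
  intro x hx
  obtain ⟨f, rfl⟩ := Ideal.Quotient.mk_surjective x
  rw [← map_mul, Ideal.Quotient.eq_zero_iff_mem] at hx
  rw [Ideal.Quotient.eq_zero_iff_mem]
  rw [I_sE] at hx ⊢
  obtain ⟨a, z, hz, hfz⟩ := Ideal.mem_span_insert.mp hx
  obtain ⟨b, z2, hz2, hz2e⟩ := Ideal.mem_span_insert.mp hz
  obtain ⟨c, hce⟩ := Ideal.mem_span_singleton'.mp hz2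
  have hf : f * X 0 = a * n₁ + b * n₂ + c * n₃ := by rw [hfz, hz2e, ← hce]; ring
  simp only [n₁, n₂, n₃] at hf
  -- reduce the relation at s = 0
  have h0' := congrArg (sub 0) hf
  simp [sub_X] at h0'
  -- h0 : the syzygy of the minors at s = 0
  have h0 : sub 0 a * (X 1 ^ 4 - X 2 * X 3)
      + sub 0 b * (X 1 ^ 2 * (X 2 ^ 2 - X 4) - X 3 * X 4)
      + sub 0 c * (X 2 * (X 2 ^ 2 - X 4) - X 1 ^ 2 * X 4) = 0 := by
    linear_combination -h0'
  -- reduce further at D = 0 to show `B² ∣ sub 0 a` modulo `D`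
  have h4' := congrArg (sub 4) h0
  simp [sub_X] at h4'
  have hdvd : (X 2 : R6) ^ 2 ∣ sub 4 (sub 0 a) * (X 1 ^ 4 - X 2 * X 3) :=
    ⟨-(sub 4 (sub 0 b) * X 1 ^ 2 + sub 4 (sub 0 c) * X 2), by linear_combination h4'⟩
  have hnd : ¬ (X 2 : R6) ∣ (X 1 ^ 4 - X 2 * X 3) := by
    refine not_dvd_of_aeval _ _ (fun i => if i = 1 then 1 else 0) (by simp) (by simp)
  obtain ⟨t, ht⟩ := sq_dvd_of_prime (prime_X_fin 2) hnd hdvd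
  obtain ⟨v, hv⟩ := X_dvd_sub_sub 4 (sub 0 a)
  have ha0 : sub 0 a = X 2 ^ 2 * t + X 4 * v := by linear_combination hv + ht
  -- the Koszul step
  have hbc : (sub 0 b + (v + t) * X 2 + t * X 1 ^ 2)
        * (X 1 ^ 2 * (X 2 ^ 2 - X 4) - X 3 * X 4)
      + (sub 0 c - (v + t) * X 1 ^ 2 - t * X 3)
        * (X 2 * (X 2 ^ 2 - X 4) - X 1 ^ 2 * X 4) = 0 := by
    linear_combination h0 - (X 1 ^ 4 - X 2 * X 3) * ha0
  obtain ⟨l, hb', hc'⟩ := koszul _ _ hbc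
  -- lift everything back
  obtain ⟨a1, ha1⟩ := X_dvd_sub_sub 0 a
  obtain ⟨b1, hb1⟩ := X_dvd_sub_sub 0 b
  obtain ⟨c1, hc1⟩ := X_dvd_sub_sub 0 c
  have hfin : f = a1 * n₁ + b1 * n₂
      + (c1 - (v + t + l * (X 2 ^ 2 - X 4)) * X 0 ^ 4 * X 5 ^ 5) * n₃ := by
    have hX0 : (X 0 : R6) ≠ 0 := MvPolynomial.X_ne_zero 0
    apply mul_left_cancel₀ hX0
    simp only [n₁, n₂, n₃]
    linear_combination hf
      + (((X 1) ^ 2 + (X 0) ^ 5 * (X 5) ^ 5) * (X 1) ^ 2 - X 2 * X 3) * ha1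
      + (((X 1) ^ 2 + (X 0) ^ 5 * (X 5) ^ 5) * ((X 2) ^ 2 - X 4) - X 3 * X 4) * hb1
      + (X 2 * ((X 2) ^ 2 - X 4) - (X 1) ^ 2 * X 4) * hc1
      + (((X 1) ^ 2 + (X 0) ^ 5 * (X 5) ^ 5) * (X 1) ^ 2 - X 2 * X 3) * ha0
      + (((X 1) ^ 2 + (X 0) ^ 5 * (X 5) ^ 5) * ((X 2) ^ 2 - X 4) - X 3 * X 4) * hb'
      + (X 2 * ((X 2) ^ 2 - X 4) - (X 1) ^ 2 * X 4) * hc'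
  rw [hfin]
  refine add_mem (add_mem ?_ ?_) ?_
  · exact Ideal.mul_mem_left _ _ (Ideal.subset_span (by simp))
  · exact Ideal.mul_mem_left _ _ (Ideal.subset_span (by simp))
  · exact Ideal.mul_mem_left _ _ (Ideal.subset_span (by simp))
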